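/- For bounded linear operators L, P on a Banach space with P^2 = P and Q = I - P, the Mori-Zwanzig identity holds: for every vector u and t \ge 0, e^{tL} L u = e^{tL} P L u + e^{tQL} Q L u + \int_0^t e^{(t-s)L} P L e^{sQL} Q L u \, ds. -/

import Mathlib

open NormedSpace intervalIntegral

set_option synthInstance.maxHeartbeats 1000000 in
theorem mz_operator_duhamel {E : Type*} [NormedAddCommGroup E] [NormedSpace ℝ E]
    [CompleteSpace E]
    (L P : E →L[ℝ] E) (hP : P * P = P) (Q : E →L[ℝ] E) (hQ : Q = 1 - P) (t : ℝ) :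
    exp (t • L) = exp (t • (Q * L)) +
      ∫ s in (0:ℝ)..t, exp ((t - s) • L) * (P * L) * exp (s • (Q * L)) := by
  set A := Q * L with hA
  have hcont : Continuous fun s : ℝ =>
      exp ((t - s) • L) * (P * L) * exp (s • A) := by
    apply Continuous.mul
    · exact ((continuous_iff_continuousAt.2 fun x => (exp_analytic (𝕂 := ℝ) x).continuousAt).comp ((continuous_const.sub continuous_id).smul
        continuous_const)).mul continuous_const
    · exact (continuous_iff_continuousAt.2 fun x => (exp_analytic (𝕂 := ℝ) x).continuousAt).comp (continuous_id.smul continuous_const)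
  have hderiv : ∀ s : ℝ, HasDerivAt
      (fun s : ℝ => exp ((t - s) • L) * exp (s • A))
      (-(exp ((t - s) • L) * (P * L) * exp (s • A))) s := by
    intro s
    have h1 : HasDerivAt (fun s : ℝ => exp ((t - s) • L))
        (-(exp ((t - s) • L) * L)) s := by
      have hg : HasDerivAt (fun x : ℝ => t - x) (-1) s := by
        simpa using (hasDerivAt_id s).const_sub t
      have := (hasDerivAt_exp_smul_const (𝕂 := ℝ) L (t - s)).scomp s hg
      simpa [Function.comp_def] using this
    have h2 : HasDerivAt (fun s : ℝ => exp (s • A)) (exp (s • A) * A) s :=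
      hasDerivAt_exp_smul_const (𝕂 := ℝ) A s
    have := h1.mul h2
    refine this.congr_deriv ?_
    have hcomm : exp (s • A) * A = A * exp (s • A) :=
      (((Commute.refl A).smul_left s).exp_left).eq
    have hPL : P * L = L - A := by rw [hA, hQ]; noncomm_ring
    rw [hcomm, hPL]
    noncomm_ring
  have hftc := intervalIntegral.integral_eq_sub_of_hasDerivAt
    (f := fun s : ℝ => exp ((t - s) • L) * exp (s • A))
    (f' := fun s => -(exp ((t - s) • L) * (P * L) * exp (s • A)))
    (fun x _ => hderiv x) (hcont.neg.intervalIntegrable 0 t)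
  rw [intervalIntegral.integral_neg] at hftc
  simp only [sub_self, zero_smul, exp_zero, one_mul, sub_zero, mul_one] at hftc
  rw [neg_eq_iff_eq_neg, neg_sub] at hftc
  rw [hftc]
  abel

/-- The Mori-Zwanzig identity: for bounded operators `L`, `P` with `P² = P`, `Q = I - P`,
`e^{tL} L u = e^{tL} P L u + e^{tQL} Q L u + ∫_0^t e^{(t-s)L} P L e^{sQL} Q L u ds`. -/
theorem mori_zwanzig_identity {E : Type*} [NormedAddCommGroup E] [NormedSpace ℝ E]
    [CompleteSpace E]
    (L P : E →L[ℝ] E) (hP : P * P = P) (Q : E →L[ℝ] E) (hQ : Q = 1 - P)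
    (u : E) (t : ℝ) (ht : 0 ≤ t) :
    exp (t • L) (L u) =
      exp (t • L) (P (L u)) + exp (t • (Q * L)) (Q (L u)) +
        ∫ s in (0:ℝ)..t, exp ((t - s) • L) (P (L (exp (s • (Q * L)) (Q (L u))))) := by
  have key := mz_operator_duhamel L P hP Q hQ t
  set v := Q (L u) with hv
  have hcont : Continuous fun s : ℝ =>
      exp ((t - s) • L) * (P * L) * exp (s • (Q * L)) := by
    apply Continuous.mul
    · exact ((continuous_iff_continuousAt.2 fun x => (exp_analytic (𝕂 := ℝ) x).continuousAt).comp ((continuous_const.sub continuous_id).smul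
        continuous_const)).mul continuous_const
    · exact (continuous_iff_continuousAt.2 fun x => (exp_analytic (𝕂 := ℝ) x).continuousAt).comp (continuous_id.smul continuous_const)
  have happ : (∫ s in (0:ℝ)..t, exp ((t - s) • L) * (P * L) * exp (s • (Q * L))) v
      = ∫ s in (0:ℝ)..t, exp ((t - s) • L) (P (L (exp (s • (Q * L)) v))) := by
    rw [ContinuousLinearMap.intervalIntegral_apply (hcont.intervalIntegrable 0 t) v]
    rfl
  have hLu : L u = P (L u) + v := by
    rw [hv, hQ]; simp
  calc exp (t • L) (L u) = exp (t • L) (P (L u)) + exp (t • L) v := by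
        conv_lhs => rw [hLu]
        rw [map_add]
    _ = _ := by
        rw [key]
        simp only [ContinuousLinearMap.add_apply, happ, add_assoc]
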